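/- (Compression lemma) Let H and G be finite simple graphs with nested solutions, with vertex sets identified with {0,…,|V_H|−1} and {0,…,|V_G|−1} via optimal orders. If A_1 ⊆ A_2 ⊆ ⋯ ⊆ A_n are subsets of V_H × V_G, then there exist compressed sets A_1' ⊆ A_2' ⊆ ⋯ ⊆ A_n' ⊆ V_H × V_G such that |A_i| = |A_i'| and I_{H□G}(A_i) ≤ I_{H□G}(A_i') for all i ∈ {1, …, n}. -/

import Mathlib

open Finset
open scoped Classical

/-- Number of edges of `G` with both endpoints in `A`. -/
noncomputable def edgesIn {V : Type*} [Fintype V] (G : SimpleGraph V) (A : Finset V) : ℕ :=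
  (G.edgeFinset.filter (fun e => ∀ v ∈ e, v ∈ A)).card

/-- `I_G(m)`: maximum number of induced edges over all `m`-subsets. -/
noncomputable def maxEdgesIn {V : Type*} [Fintype V] (G : SimpleGraph V) (m : ℕ) : ℕ :=
  (Finset.univ.powersetCard m).sup (edgesIn G)

/-- The `δ`-sequence of `G`. -/
noncomputable def deltaSeq {V : Type*} [Fintype V] (G : SimpleGraph V) (m : ℕ) : ℤ :=
  (maxEdgesIn G m : ℤ) - (maxEdgesIn G (m - 1) : ℤ)

/-- `G` has nested solutions. -/
def hasNS {V : Type*} [Fintype V] (G : SimpleGraph V) : Prop :=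
  ∃ A : ℕ → Finset V,
    (∀ i, 1 ≤ i → i < Fintype.card V → A i ⊆ A (i + 1)) ∧
    (∀ i, 1 ≤ i → i ≤ Fintype.card V →
      (A i).card = i ∧ edgesIn G (A i) = maxEdgesIn G i)

/-- `G` is `δ`-dense. -/
def deltaDense {V : Type*} [Fintype V] (G : SimpleGraph V) : Prop :=
  ∀ i, 2 ≤ i → i ≤ Fintype.card V → deltaSeq G i ≤ deltaSeq G (i - 1) → 2 ≤ deltaSeq G i

/-- The `d`-th cartesian power of `G`. -/
def cartPower {V : Type*} (G : SimpleGraph V) (d : ℕ) : SimpleGraph (Fin d → V) where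
  Adj x y := ∃ i, G.Adj (x i) (y i) ∧ ∀ j, j ≠ i → x j = y j
  symm := by
    constructor
    rintro x y ⟨i, h, hj⟩
    exact ⟨i, h.symm, fun j hje => (hj j hje).symm⟩
  loopless := by
    constructor
    rintro x ⟨i, h, -⟩
    exact G.loopless.irrefl _ h

/-- The initial segment `{0, …, k-1}` of `Fin N`. -/
def finSeg (N k : ℕ) : Finset (Fin N) :=
  Finset.univ.filter (fun v => (v : ℕ) < k)

/-- The set of the first `m` elements under a (strict total) order `r`. -/
noncomputable def initSeg {α : Type*} [Fintype α] (r : α → α → Prop) (m : ℕ) : Finset α :=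
  Finset.univ.filter (fun u => (Finset.univ.filter (fun w => r w u)).card < m)

/-- Strict lexicographic order on tuples. -/
def lexLt {n N : ℕ} (x y : Fin n → Fin N) : Prop :=
  ∃ i, (∀ j, j < i → x j = y j) ∧ x i < y i

/-- Strict colexicographic order on tuples. -/
def colexLt {n N : ℕ} (x y : Fin n → Fin N) : Prop :=
  ∃ i, (∀ j, i < j → x j = y j) ∧ x i < y i

/-- Strict lexicographic order on pairs. -/
def lexPair {N : ℕ} (p q : Fin N × Fin N) : Prop :=
  p.1 < q.1 ∨ (p.1 = q.1 ∧ p.2 < q.2)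

/-- Strict colexicographic order on pairs. -/
def colexPair {N : ℕ} (p q : Fin N × Fin N) : Prop :=
  p.2 < q.2 ∨ (p.2 = q.2 ∧ p.1 < q.1)

/-- A subset of `Fin M × Fin N` is compressed. -/
def IsCompressed {M N : ℕ} (A : Finset (Fin M × Fin N)) : Prop :=
  (∀ a : Fin M, ∀ y y' : Fin N, (a, y) ∈ A → y' ≤ y → (a, y') ∈ A) ∧
  (∀ b : Fin N, ∀ x x' : Fin M, (x, b) ∈ A → x' ≤ x → (x', b) ∈ A)

/-- Number of boundary edges: edges with exactly one endpoint in `A`. -/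
noncomputable def edgesBd {V : Type*} [Fintype V] (G : SimpleGraph V) (A : Finset V) : ℕ :=
  (G.edgeFinset.filter (fun e => ∃ u ∈ e, ∃ v ∈ e, u ∈ A ∧ v ∉ A)).card

section Aux

noncomputable def pairCount {V : Type*} [Fintype V] (G : SimpleGraph V) (S : Finset V) : ℕ :=
  ((S ×ˢ S).filter fun p => G.Adj p.1 p.2).card

lemma pairCount_eq {V : Type*} [Fintype V] (G : SimpleGraph V) (S : Finset V) :
    pairCount G S = 2 * edgesIn G S := by
  classical
  let G' : SimpleGraph V :=
    { Adj := fun u v => G.Adj u v ∧ u ∈ S ∧ v ∈ S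
      symm := by constructor; rintro u v ⟨h, hu, hv⟩; exact ⟨h.symm, hv, hu⟩
      loopless := by constructor; rintro u ⟨h, -⟩; exact G.loopless.irrefl _ h }
  have h1 : edgesIn G S = G'.edgeFinset.card := by
    unfold edgesIn
    congr 1
    ext e
    induction e with
    | _ u v =>
      simp only [mem_filter, SimpleGraph.mem_edgeFinset, SimpleGraph.mem_edgeSet, Sym2.mem_iff]
      constructor
      · rintro ⟨h, hS⟩
        exact ⟨h, hS u (Or.inl rfl), hS v (Or.inr rfl)⟩
      · rintro ⟨hadj, hu, hv⟩
        exact ⟨hadj, fun w hw => by rcases hw with rfl | rfl <;> assumption⟩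
  have h2 : pairCount G S = (univ.filter fun (p : V × V) => G'.Adj p.1 p.2).card := by
    unfold pairCount
    congr 1
    ext p
    simp only [mem_filter, mem_product, mem_univ, true_and]
    tauto
  rw [h1, h2, SimpleGraph.two_mul_card_edgeFinset]

lemma edgesIn_le_max {V : Type*} [Fintype V] (G : SimpleGraph V) (S : Finset V) :
    edgesIn G S ≤ maxEdgesIn G S.card :=
  le_sup (by simp [Finset.mem_powersetCard, subset_univ])

lemma card_finSeg {N k : ℕ} (h : k ≤ N) : (finSeg N k).card = k := by
  have he : finSeg N k
      = (Finset.range k).attachFin (fun m hm => lt_of_lt_of_le (mem_range.mp hm) h) := by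
    ext a
    simp [finSeg, Finset.mem_attachFin, mem_range]
  rw [he, Finset.card_attachFin, Finset.card_range]

variable {M N : ℕ}

def rowSet (A : Finset (Fin M × Fin N)) (a : Fin M) : Finset (Fin N) :=
  univ.filter fun b => (a, b) ∈ A

lemma rowSet_card_le (A : Finset (Fin M × Fin N)) (a : Fin M) : (rowSet A a).card ≤ N := by
  simpa using Finset.card_le_univ (rowSet A a)

noncomputable def rowComp (A : Finset (Fin M × Fin N)) : Finset (Fin M × Fin N) :=
  univ.filter fun p => (p.2 : ℕ) < (rowSet A p.1).card

lemma mem_rowComp {A : Finset (Fin M × Fin N)} {p : Fin M × Fin N} :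
    p ∈ rowComp A ↔ (p.2 : ℕ) < (rowSet A p.1).card := by
  simp [rowComp]

lemma rowSet_rowComp (A : Finset (Fin M × Fin N)) (a : Fin M) :
    rowSet (rowComp A) a = finSeg N ((rowSet A a).card) := by
  ext b
  simp only [rowSet, mem_rowComp, finSeg, mem_filter, mem_univ, true_and]
  convert Iff.rfl
  exact ⟨fun h => (Finset.mem_filter.mp h).2, fun h => Finset.mem_filter.mpr ⟨mem_univ _, h⟩⟩

lemma rowSet_mono {A B : Finset (Fin M × Fin N)} (h : A ⊆ B) (a : Fin M) :
    rowSet A a ⊆ rowSet B a := by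
  intro b hb
  simp only [rowSet, mem_filter, mem_univ, true_and] at *
  exact h hb

lemma rowComp_mono {A B : Finset (Fin M × Fin N)} (h : A ⊆ B) : rowComp A ⊆ rowComp B := by
  intro p hp
  rw [mem_rowComp] at *
  exact lt_of_lt_of_le hp (Finset.card_le_card (rowSet_mono h p.1))

lemma card_eq_sum_rowSet (A : Finset (Fin M × Fin N)) :
    A.card = ∑ a, (rowSet A a).card := by
  rw [Finset.card_eq_sum_card_fiberwise (f := Prod.fst) (t := univ) (fun x _ => mem_univ _)]
  refine Finset.sum_congr rfl fun a _ => ?_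
  refine Finset.card_bij (fun p _ => p.2) ?_ ?_ ?_
  · rintro p hp
    simp only [mem_filter] at hp
    simp only [rowSet, mem_filter, mem_univ, true_and]
    rw [show (a, p.2) = p from Prod.ext hp.2.symm rfl]
    exact hp.1
  · rintro p hp q hq hpq
    simp only [mem_filter] at hp hq
    exact Prod.ext (hp.2.trans hq.2.symm) hpq
  · rintro b hb
    simp only [rowSet, mem_filter, mem_univ, true_and] at hb
    exact ⟨(a, b), by simp [hb], rfl⟩

lemma card_rowComp (A : Finset (Fin M × Fin N)) : (rowComp A).card = A.card := by
  rw [card_eq_sum_rowSet, card_eq_sum_rowSet A]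
  refine Finset.sum_congr rfl fun a _ => ?_
  rw [rowSet_rowComp, card_finSeg (rowSet_card_le A a)]


lemma pairCount_box (H : SimpleGraph (Fin M)) (G : SimpleGraph (Fin N))
    (A : Finset (Fin M × Fin N)) :
    pairCount (H.boxProd G) A
      = (∑ a, pairCount G (rowSet A a))
        + ∑ q ∈ (univ ×ˢ univ).filter (fun q : Fin M × Fin M => H.Adj q.1 q.2),
            (rowSet A q.1 ∩ rowSet A q.2).card := by
  classical
  set T := ((A ×ˢ A).filter fun p => (H.boxProd G).Adj p.1 p.2) with hT
  have hsplit : (T.filter fun p => p.1.1 = p.2.1).card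
      + (T.filter fun p => ¬ p.1.1 = p.2.1).card = T.card :=
    Finset.card_filter_add_card_filter_not _
  have h1 : (T.filter fun p => p.1.1 = p.2.1).card = ∑ a, pairCount G (rowSet A a) := by
    rw [Finset.card_eq_sum_card_fiberwise
      (f := fun p => p.1.1) (t := univ) (fun x _ => mem_univ _)]
    refine Finset.sum_congr rfl fun a _ => ?_
    refine (Finset.card_bij (fun p _ => (p.1.2, p.2.2)) ?_ ?_ ?_)
    · rintro p hp
      simp only [hT, mem_filter, mem_product, SimpleGraph.boxProd_adj] at hp
      obtain ⟨⟨⟨⟨h1A, h2A⟩, hadj⟩, heq⟩, ha⟩ := hp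
      have hGadj : G.Adj p.1.2 p.2.2 := by
        rcases hadj with ⟨hH, -⟩ | ⟨hG', -⟩
        · exact absurd heq hH.ne
        · exact hG'
      simp only [pairCount, mem_filter, mem_product, rowSet, mem_univ, true_and]
      refine ⟨⟨?_, ?_⟩, hGadj⟩
      · rw [show (a, p.1.2) = p.1 from Prod.ext ha.symm rfl]; exact h1A
      · rw [show (a, p.2.2) = p.2 from Prod.ext (heq ▸ ha).symm rfl]; exact h2A
    · rintro p hp q hq hpq
      rw [Prod.mk.injEq] at hpq
      simp only [mem_filter] at hp hq
      have e1 : p.1 = q.1 := Prod.ext (hp.2.trans hq.2.symm) hpq.1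
      have e2 : p.2 = q.2 := Prod.ext
        ((hp.1.2.symm.trans hp.2).trans ((hq.1.2.symm.trans hq.2).symm)) hpq.2
      exact Prod.ext e1 e2
    · rintro ⟨b, d⟩ hbd
      simp only [pairCount, mem_filter, mem_product, rowSet, mem_univ, true_and] at hbd
      obtain ⟨⟨hb, hd⟩, hGbd⟩ := hbd
      refine ⟨((a, b), (a, d)), ?_, rfl⟩
      refine Finset.mem_filter.mpr ⟨Finset.mem_filter.mpr ⟨Finset.mem_filter.mpr
        ⟨Finset.mem_product.mpr ⟨hb, hd⟩, ?_⟩, rfl⟩, rfl⟩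
      exact SimpleGraph.boxProd_adj.mpr (Or.inr ⟨hGbd, rfl⟩)
  have h2 : (T.filter fun p => ¬ p.1.1 = p.2.1).card
      = ∑ q ∈ (univ ×ˢ univ).filter (fun q : Fin M × Fin M => H.Adj q.1 q.2),
          (rowSet A q.1 ∩ rowSet A q.2).card := by
    rw [Finset.card_eq_sum_card_fiberwise (f := fun p => (p.1.1, p.2.1))
      (t := (univ ×ˢ univ).filter (fun q : Fin M × Fin M => H.Adj q.1 q.2)) ?_]
    · refine Finset.sum_congr rfl fun q hq => ?_
      refine (Finset.card_bij (fun p _ => p.1.2) ?_ ?_ ?_)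
      · rintro p hp
        simp only [hT, mem_filter, mem_product, SimpleGraph.boxProd_adj] at hp
        obtain ⟨⟨⟨⟨h1A, h2A⟩, hadj⟩, hne⟩, hfib⟩ := hp
        have hfib1 : p.1.1 = q.1 := congrArg Prod.fst hfib
        have hfib2 : p.2.1 = q.2 := congrArg Prod.snd hfib
        have hsnd : p.1.2 = p.2.2 := by
          rcases hadj with ⟨-, h⟩ | ⟨-, h⟩
          · exact h
          · exact absurd h hne
        simp only [mem_inter, rowSet, mem_filter, mem_univ, true_and]
        constructor
        · rw [show (q.1, p.1.2) = p.1 from Prod.ext hfib1.symm rfl]; exact h1A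
        · rw [show (q.2, p.1.2) = p.2 from Prod.ext hfib2.symm hsnd]; exact h2A
      · rintro p hp q' hq' hpq
        simp only [hT, mem_filter, mem_product, SimpleGraph.boxProd_adj] at hp hq'
        obtain ⟨⟨⟨-, hadjp⟩, hnep⟩, hfibp⟩ := hp
        obtain ⟨⟨⟨-, hadjq⟩, hneq⟩, hfibq⟩ := hq'
        have hfibp1 : p.1.1 = q.1 := congrArg Prod.fst hfibp
        have hfibp2 : p.2.1 = q.2 := congrArg Prod.snd hfibp
        have hfibq1 : q'.1.1 = q.1 := congrArg Prod.fst hfibq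
        have hfibq2 : q'.2.1 = q.2 := congrArg Prod.snd hfibq
        have hp2 : p.1.2 = p.2.2 := by
          rcases hadjp with ⟨-, h⟩ | ⟨-, h⟩
          · exact h
          · exact absurd h hnep
        have hq2 : q'.1.2 = q'.2.2 := by
          rcases hadjq with ⟨-, h⟩ | ⟨-, h⟩
          · exact h
          · exact absurd h hneq
        refine Prod.ext (Prod.ext (hfibp1.trans hfibq1.symm) hpq)
          (Prod.ext (hfibp2.trans hfibq2.symm) ?_)
        rw [← hp2, ← hq2]; exact hpq
      · rintro b hb
        simp only [mem_inter, rowSet, mem_filter, mem_univ, true_and] at hb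
        simp only [mem_filter, mem_product, mem_univ, true_and] at hq
        refine ⟨((q.1, b), (q.2, b)), ?_, rfl⟩
        refine Finset.mem_filter.mpr ⟨Finset.mem_filter.mpr ⟨Finset.mem_filter.mpr
          ⟨Finset.mem_product.mpr ⟨hb.1, hb.2⟩, ?_⟩, hq.ne⟩, rfl⟩
        exact SimpleGraph.boxProd_adj.mpr (Or.inl ⟨hq, rfl⟩)
    · rintro p hp
      replace hp := Finset.mem_coe.mp hp
      simp only [hT, mem_filter, mem_product, SimpleGraph.boxProd_adj] at hp
      simp only [Finset.mem_coe, mem_filter, mem_product, mem_univ, true_and]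
      rcases hp.1.2 with ⟨h, -⟩ | ⟨-, h⟩
      · exact h
      · exact absurd h hp.2
  rw [pairCount, ← hT, ← hsplit, h1, h2]

lemma finSeg_inter {N k l : ℕ} : finSeg N k ∩ finSeg N l = finSeg N (min k l) := by
  ext b
  simp [finSeg, lt_min_iff, and_assoc]

lemma pairCount_le_rowComp (H : SimpleGraph (Fin M)) (G : SimpleGraph (Fin N))
    (hG : ∀ k, k ≤ N → edgesIn G (finSeg N k) = maxEdgesIn G k)
    (A : Finset (Fin M × Fin N)) :
    pairCount (H.boxProd G) A ≤ pairCount (H.boxProd G) (rowComp A) := by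
  rw [pairCount_box, pairCount_box]
  refine Nat.add_le_add (Finset.sum_le_sum fun a _ => ?_) (Finset.sum_le_sum fun q _ => ?_)
  · rw [rowSet_rowComp, pairCount_eq, pairCount_eq, hG _ (rowSet_card_le A a)]
    exact Nat.mul_le_mul_left 2 (edgesIn_le_max G _)
  · rw [rowSet_rowComp, rowSet_rowComp, finSeg_inter,
      card_finSeg (le_trans (min_le_left _ _) (rowSet_card_le A q.1))]
    exact le_min (Finset.card_le_card inter_subset_left)
      (Finset.card_le_card inter_subset_right)

def swapF (A : Finset (Fin M × Fin N)) : Finset (Fin N × Fin M) := A.image Prod.swap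

lemma mem_swapF {A : Finset (Fin M × Fin N)} {p : Fin N × Fin M} :
    p ∈ swapF A ↔ (p.2, p.1) ∈ A := by
  constructor
  · intro h
    obtain ⟨q, hq, rfl⟩ := Finset.mem_image.mp h
    exact hq
  · intro h
    exact Finset.mem_image.mpr ⟨(p.2, p.1), h, rfl⟩

lemma card_swapF (A : Finset (Fin M × Fin N)) : (swapF A).card = A.card :=
  Finset.card_image_of_injective _ Prod.swap_injective

lemma swapF_mono {A B : Finset (Fin M × Fin N)} (h : A ⊆ B) : swapF A ⊆ swapF B :=
  Finset.image_subset_image h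

lemma pairCount_swapF (H : SimpleGraph (Fin M)) (G : SimpleGraph (Fin N))
    (A : Finset (Fin M × Fin N)) :
    pairCount (G.boxProd H) (swapF A) = pairCount (H.boxProd G) A := by
  refine Finset.card_bij (fun p _ => ((p.1.2, p.1.1), (p.2.2, p.2.1))) ?_ ?_ ?_
  · rintro p hp
    simp only [mem_filter, mem_product, mem_swapF, SimpleGraph.boxProd_adj] at hp ⊢
    tauto
  · rintro p hp q hq hpq
    rw [Prod.mk.injEq, Prod.mk.injEq, Prod.mk.injEq] at hpq
    obtain ⟨⟨e1, e2⟩, e3, e4⟩ := hpq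
    exact Prod.ext (Prod.ext e2 e1) (Prod.ext e4 e3)
  · rintro p hp
    refine ⟨((p.1.2, p.1.1), (p.2.2, p.2.1)), ?_, rfl⟩
    simp only [mem_filter, mem_product, mem_swapF, SimpleGraph.boxProd_adj] at hp ⊢
    tauto

noncomputable def colComp (A : Finset (Fin M × Fin N)) : Finset (Fin M × Fin N) :=
  swapF (rowComp (swapF A))

lemma mem_colComp {A : Finset (Fin M × Fin N)} {p : Fin M × Fin N} :
    p ∈ colComp A ↔ (p.1 : ℕ) < (rowSet (swapF A) p.2).card := by
  rw [colComp, mem_swapF, mem_rowComp]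

lemma isCompressed_colComp_rowComp (A : Finset (Fin M × Fin N)) :
    IsCompressed (colComp (rowComp A)) := by
  constructor
  · intro a y y' hy hle
    rw [mem_colComp] at hy ⊢
    refine lt_of_lt_of_le hy (Finset.card_le_card ?_)
    intro x hx
    simp only [rowSet, mem_filter, mem_univ, true_and, mem_swapF, mem_rowComp] at hx ⊢
    have := Fin.le_def.mp hle
    omega
  · intro b x x' hx hle
    rw [mem_colComp] at hx ⊢
    exact lt_of_le_of_lt (Fin.le_def.mp hle) hx


end Aux

/-- Compression lemma.  `H` and `G` are graphs on
`{0, …, M-1}` and `{0, …, N-1}` whose identifications are optimal orders.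
Given a chain `A_1 ⊆ ⋯ ⊆ A_n` of subsets of `V_H × V_G`, there is a chain of
compressed sets `A_1' ⊆ ⋯ ⊆ A_n'` with `|A_i'| = |A_i|` and
`I_{H□G}(A_i) ≤ I_{H□G}(A_i')`. -/
theorem stmt_5 {M N : ℕ} (H : SimpleGraph (Fin M)) (G : SimpleGraph (Fin N))
    (hH : ∀ k, k ≤ M → edgesIn H (finSeg M k) = maxEdgesIn H k)
    (hG : ∀ k, k ≤ N → edgesIn G (finSeg N k) = maxEdgesIn G k)
    (n : ℕ) (A : ℕ → Finset (Fin M × Fin N))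
    (hchain : ∀ i, 1 ≤ i → i < n → A i ⊆ A (i + 1)) :
    ∃ A' : ℕ → Finset (Fin M × Fin N),
      (∀ i, 1 ≤ i → i < n → A' i ⊆ A' (i + 1)) ∧
      ∀ i, 1 ≤ i → i ≤ n →
        IsCompressed (A' i) ∧ (A' i).card = (A i).card ∧
          edgesIn (H.boxProd G) (A i) ≤ edgesIn (H.boxProd G) (A' i) := by
  refine ⟨fun i => colComp (rowComp (A i)), ?_, ?_⟩
  · intro i h1 h2
    exact swapF_mono (rowComp_mono (swapF_mono (rowComp_mono (hchain i h1 h2))))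
  · intro i h1 h2
    refine ⟨isCompressed_colComp_rowComp _, ?_, ?_⟩
    · show (swapF (rowComp (swapF (rowComp (A i))))).card = _
      rw [card_swapF, card_rowComp, card_swapF, card_rowComp]
    · have e1 : pairCount (H.boxProd G) (A i) ≤ pairCount (H.boxProd G) (rowComp (A i)) :=
        pairCount_le_rowComp H G hG (A i)
      have e2 : pairCount (G.boxProd H) (swapF (rowComp (A i)))
          = pairCount (H.boxProd G) (rowComp (A i)) := pairCount_swapF H G _
      have e3 : pairCount (G.boxProd H) (swapF (rowComp (A i)))
          ≤ pairCount (G.boxProd H) (rowComp (swapF (rowComp (A i)))) :=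
        pairCount_le_rowComp G H hH _
      have e4 : pairCount (H.boxProd G) (swapF (rowComp (swapF (rowComp (A i)))))
          = pairCount (G.boxProd H) (rowComp (swapF (rowComp (A i)))) :=
        pairCount_swapF G H _
      have d1 := pairCount_eq (H.boxProd G) (A i)
      have d2 := pairCount_eq (H.boxProd G) (swapF (rowComp (swapF (rowComp (A i)))))
      show edgesIn (H.boxProd G) (A i)
        ≤ edgesIn (H.boxProd G) (swapF (rowComp (swapF (rowComp (A i)))))
      omega
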